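/- For every pure two-qudit state ρ = |ψ⟩⟨ψ| on ℂ^d⊗ℂ^d (d ≥ 2), the geometric quantum discord satisfies D_g(|ψ⟩⟨ψ|) ≤ ((d−1)/(d(d+1)))·(d + C̃²) ≤ (d−1)/d, where C̃ = √(1 − ‖r₂‖²) is the normalized concurrence of |ψ⟩⟨ψ| and r₂ is the Bloch vector of the reduced state ρ₂ = tr₁ρ relative to any Bloch basis. -/

import Mathlib

open Matrix Finset
open scoped Kronecker ComplexOrder

noncomputable section

/-- A quantum state: a positive semidefinite (hence Hermitian) matrix of trace 1. -/
def IsState {n : Type*} [Fintype n] (ρ : Matrix n n ℂ) : Prop :=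
  ρ.PosSemidef ∧ ρ.trace = 1

/-- The pure state (rank-one projection) associated with a vector `ψ`. -/
def pureState {n : Type*} (ψ : n → ℂ) : Matrix n n ℂ :=
  Matrix.vecMulVec ψ (star ψ)

/-- A Bloch basis for `d × d` complex matrices: a family of nonzero traceless Hermitian
matrices with `tr[Υ k * Υ m] = 2 δ_{km}`. -/
def IsBlochBasis (d : ℕ) (Υ : Fin (d ^ 2 - 1) → Matrix (Fin d) (Fin d) ℂ) : Prop :=
  (∀ k, Υ k ≠ 0) ∧ (∀ k, (Υ k).IsHermitian) ∧ (∀ k, (Υ k).trace = 0) ∧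
    (∀ k m, (Υ k * Υ m).trace = if k = m then 2 else 0)

/-- The Bloch vector of a state `ρ` on `ℂ^d` relative to a Bloch basis `Υ`. -/
def blochVector {d : ℕ} (ρ : Matrix (Fin d) (Fin d) ℂ)
    (Υ : Fin (d ^ 2 - 1) → Matrix (Fin d) (Fin d) ℂ) : Fin (d ^ 2 - 1) → ℝ :=
  fun k => Real.sqrt ((d : ℝ) / (2 * ((d : ℝ) - 1))) * ((ρ * Υ k).trace).re

/-- Partial trace over the first tensor factor. -/
def ptrace1 {d₁ d₂ : ℕ} (ρ : Matrix (Fin d₁ × Fin d₂) (Fin d₁ × Fin d₂) ℂ) :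
    Matrix (Fin d₂) (Fin d₂) ℂ :=
  Matrix.of fun j j' => ∑ i, ρ (i, j) (i, j')

/-- Partial trace over the second tensor factor. -/
def ptrace2 {d₁ d₂ : ℕ} (ρ : Matrix (Fin d₁ × Fin d₂) (Fin d₁ × Fin d₂) ℂ) :
    Matrix (Fin d₁) (Fin d₁) ℂ :=
  Matrix.of fun i i' => ∑ j, ρ (i, j) (i', j)

/-- Partial transpose with respect to the second tensor factor. -/
def ptranspose2 {d₁ d₂ : ℕ} (ρ : Matrix (Fin d₁ × Fin d₂) (Fin d₁ × Fin d₂) ℂ) :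
    Matrix (Fin d₁ × Fin d₂) (Fin d₁ × Fin d₂) ℂ :=
  Matrix.of fun p q => ρ (p.1, q.2) (q.1, p.2)

/-- The correlation matrix of a two-qudit state, `T^{ij} = tr[ρ (Υ₁ i ⊗ Υ₂ j)]`. -/
def corrMatrix {d₁ d₂ : ℕ} (ρ : Matrix (Fin d₁ × Fin d₂) (Fin d₁ × Fin d₂) ℂ)
    (Υ₁ : Fin (d₁ ^ 2 - 1) → Matrix (Fin d₁) (Fin d₁) ℂ)
    (Υ₂ : Fin (d₂ ^ 2 - 1) → Matrix (Fin d₂) (Fin d₂) ℂ) :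
    Matrix (Fin (d₁ ^ 2 - 1)) (Fin (d₂ ^ 2 - 1)) ℝ :=
  Matrix.of fun i j => ((ρ * (Υ₁ i ⊗ₖ Υ₂ j)).trace).re

/-- A quantum-classical state `χ = Σ_k α_k σ_k ⊗ |k⟩⟨k|`. -/
def IsQCState {d₁ d₂ : ℕ} (χ : Matrix (Fin d₁ × Fin d₂) (Fin d₁ × Fin d₂) ℂ) : Prop :=
  ∃ (α : Fin d₂ → ℝ) (σ : Fin d₂ → Matrix (Fin d₁) (Fin d₁) ℂ) (e : Fin d₂ → Fin d₂ → ℂ),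
    (∀ k, 0 ≤ α k) ∧ (∑ k, α k = 1) ∧ (∀ k, IsState (σ k)) ∧
    (∀ k l, ∑ i, star (e k i) * e l i = if k = l then (1 : ℂ) else 0) ∧
    χ = ∑ k, (α k : ℂ) • (σ k ⊗ₖ pureState (e k))

/-- The geometric quantum discord (with the Hilbert–Schmidt distance):
`D_g(ρ) = min over quantum-classical χ of tr[(ρ - χ)²]`. -/
def Dg {d₁ d₂ : ℕ} (ρ : Matrix (Fin d₁ × Fin d₂) (Fin d₁ × Fin d₂) ℂ) : ℝ :=
  sInf {x : ℝ | ∃ χ, IsQCState χ ∧ x = (((ρ - χ) * (ρ - χ)).trace).re}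

/-- `η` lists the eigenvalues of the real matrix `G` in decreasing order with algebraic
multiplicities: `η` is antitone and the characteristic polynomial of `G` splits as
`∏ (X - η n)`. -/
def IsEigList {N : ℕ} (G : Matrix (Fin N) (Fin N) ℝ) (η : Fin N → ℝ) : Prop :=
  Antitone η ∧ G.charpoly = ∏ n, (Polynomial.X - Polynomial.C (η n))

/-- A simplex frame in `ℝ^N`: `d` unit vectors summing to zero with pairwise scalar
products `-1/(d-1)`. -/
def IsSimplexFrame {N : ℕ} (d : ℕ) (y : Fin d → Fin N → ℝ) : Prop :=
  (∀ k, ∑ i, y k i ^ 2 = 1) ∧ (∀ i, ∑ k, y k i = 0) ∧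
    (∀ j k, j ≠ k → ∑ i, y j i * y k i = -1 / ((d : ℝ) - 1))

/-- The operator `Π_{Ω_y} = ((d-1)/d) Σ_k y_k y_kᵀ` associated with a simplex frame. -/
def simplexProj {N : ℕ} (d : ℕ) (y : Fin d → Fin N → ℝ) : Matrix (Fin N) (Fin N) ℝ :=
  (((d : ℝ) - 1) / d) • ∑ k, Matrix.vecMulVec (y k) (y k)

/-- The matrix `G(ρ) = ((d₂-1)/(d₁ d₂)) r₂ r₂ᵀ + (1/4) T_ρᵀ T_ρ`. -/
def Gmat {d₁ d₂ : ℕ} (ρ : Matrix (Fin d₁ × Fin d₂) (Fin d₁ × Fin d₂) ℂ)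
    (Υ₁ : Fin (d₁ ^ 2 - 1) → Matrix (Fin d₁) (Fin d₁) ℂ)
    (Υ₂ : Fin (d₂ ^ 2 - 1) → Matrix (Fin d₂) (Fin d₂) ℂ) :
    Matrix (Fin (d₂ ^ 2 - 1)) (Fin (d₂ ^ 2 - 1)) ℝ :=
  (((d₂ : ℝ) - 1) / (d₁ * d₂)) •
      Matrix.vecMulVec (blochVector (ptrace1 ρ) Υ₂) (blochVector (ptrace1 ρ) Υ₂)
    + (4 : ℝ)⁻¹ • ((corrMatrix ρ Υ₁ Υ₂)ᵀ * corrMatrix ρ Υ₁ Υ₂)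

/-- The trace norm (sum of singular values) of a complex square matrix. -/
def traceNorm {n : Type*} [Fintype n] [DecidableEq n] (X : Matrix n n ℂ) : ℝ :=
  ∑ i, Real.sqrt ((Matrix.posSemidef_conjTranspose_mul_self X).1.eigenvalues i)

/-- The negativity `N_ρ = (‖ρ^{T₂}‖₁ - 1)/2`. -/
def negativity {d₁ d₂ : ℕ} (ρ : Matrix (Fin d₁ × Fin d₂) (Fin d₁ × Fin d₂) ℂ) : ℝ :=
  (traceNorm (ptranspose2 ρ) - 1) / 2

/-- The concurrence of a pure two-qudit state, `C = √(2 (1 - tr[ρ₁²]))`, `ρ₁ = tr₂ ρ`. -/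
def concurrence {d₁ d₂ : ℕ} (ρ : Matrix (Fin d₁ × Fin d₂) (Fin d₁ × Fin d₂) ℂ) : ℝ :=
  Real.sqrt (2 * (1 - ((ptrace2 ρ * ptrace2 ρ).trace).re))

end


section AuxLemmas

variable {n : Type*} [Fintype n] [DecidableEq n]

set_option linter.unusedSectionVars false

lemma pureState_apply (v : n → ℂ) (p q : n) : pureState v p q = v p * star (v q) := rfl

lemma pureState_isHermitian (v : n → ℂ) : (pureState v).IsHermitian := by
  ext i j
  simp [conjTranspose_apply, pureState_apply, mul_comm]

lemma trace_pure_mul_pure (a b : n → ℂ) :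
    (pureState a * pureState b).trace
      = (∑ i, star (a i) * b i) * (∑ i, star (b i) * a i) := by
  simp only [Matrix.trace, Matrix.diag, Matrix.mul_apply, pureState_apply]
  rw [Finset.sum_mul_sum]
  rw [Finset.sum_comm]
  refine Finset.sum_congr rfl fun q _ => Finset.sum_congr rfl fun p _ => by ring

lemma posSemidef_pureState (v : n → ℂ) : (pureState v).PosSemidef := by
  refine Matrix.PosSemidef.of_dotProduct_mulVec_nonneg (pureState_isHermitian v) fun x => ?_
  have : dotProduct (star x) (pureState v *ᵥ x)
      = star (∑ p, star (v p) * x p) * (∑ p, star (v p) * x p) := by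
    simp only [dotProduct, Matrix.mulVec, dotProduct, pureState_apply,
      Pi.star_apply, star_sum, StarMul.star_mul, star_star]
    rw [Finset.sum_mul_sum]
    simp only [Finset.mul_sum]
    refine Finset.sum_congr rfl fun q _ => Finset.sum_congr rfl fun p _ => ?_
    ring
  rw [this]
  exact star_mul_self_nonneg _

lemma trace_pureState (v : n → ℂ) :
    (pureState v).trace = ∑ i, star (v i) * v i := by
  simp only [Matrix.trace, Matrix.diag, pureState_apply]
  exact Finset.sum_congr rfl fun i _ => by ring

lemma trace_mul_self_re_nonneg {A : Matrix n n ℂ} (hA : A.IsHermitian) :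
    0 ≤ ((A * A).trace).re := by
  have h : (A * A).trace = ∑ p, ∑ q, ((Complex.normSq (A p q) : ℂ)) := by
    simp only [Matrix.trace, Matrix.diag, Matrix.mul_apply]
    refine Finset.sum_congr rfl fun p _ => Finset.sum_congr rfl fun q _ => ?_
    rw [← hA.apply q p]
    simp [Complex.star_def, Complex.mul_conj]
  rw [h]
  rw [Complex.re_sum]
  refine Finset.sum_nonneg fun p _ => ?_
  rw [Complex.re_sum]
  exact Finset.sum_nonneg fun q _ => by simp [Complex.normSq_nonneg]

lemma posSemidef_ofReal_smul {r : ℝ} (hr : 0 ≤ r) {A : Matrix n n ℂ} (hA : A.PosSemidef) :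
    ((r : ℂ) • A).PosSemidef := by
  refine Matrix.PosSemidef.of_dotProduct_mulVec_nonneg ?_ fun x => ?_
  · unfold Matrix.IsHermitian
    rw [Matrix.conjTranspose_smul, hA.1]
    simp
  · rw [Matrix.smul_mulVec, dotProduct_smul, smul_eq_mul]
    exact mul_nonneg (by exact_mod_cast Complex.zero_le_real.2 hr) (hA.dotProduct_mulVec_nonneg x)

lemma bessel {d : ℕ} (hd : 2 ≤ d) {P : Matrix (Fin d) (Fin d) ℂ}
    (hP : P.IsHermitian) (htrP : P.trace = 1)
    {Υ : Fin (d ^ 2 - 1) → Matrix (Fin d) (Fin d) ℂ} (hΥ : IsBlochBasis d Υ) :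
    ∑ m, (((P * Υ m).trace).re) ^ 2 ≤ 2 * (((P * P).trace).re - 1 / d) := by
  obtain ⟨-, hherm, htr0, horth⟩ := hΥ
  have hd0 : (d : ℂ) ≠ 0 := by positivity
  set t : Fin (d ^ 2 - 1) → ℝ := fun m => ((P * Υ m).trace).re with ht
  have hreal : ∀ m, (P * Υ m).trace = ((t m : ℝ) : ℂ) := by
    intro m
    have h1 : (starRingEnd ℂ) ((P * Υ m).trace) = (P * Υ m).trace := by
      calc (starRingEnd ℂ) ((P * Υ m).trace) = ((P * Υ m)ᴴ).trace :=
            (Matrix.trace_conjTranspose _).symm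
        _ = ((Υ m)ᴴ * Pᴴ).trace := by rw [Matrix.conjTranspose_mul]
        _ = (Υ m * P).trace := by rw [hherm m, hP]
        _ = (P * Υ m).trace := Matrix.trace_mul_comm _ _
    exact (Complex.conj_eq_iff_re.mp h1).symm
  set A : Matrix (Fin d) (Fin d) ℂ :=
    P - (((d : ℝ)⁻¹ : ℝ) : ℂ) • (1 : Matrix (Fin d) (Fin d) ℂ)
      - ∑ m, ((t m / 2 : ℝ) : ℂ) • Υ m with hA
  have hAherm : A.IsHermitian := by
    show Aᴴ = A
    rw [hA, Matrix.conjTranspose_sub, Matrix.conjTranspose_sub, hP,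
      Matrix.conjTranspose_smul, Matrix.conjTranspose_one, Matrix.conjTranspose_sum]
    congr 1
    · congr 1
      simp
    · refine Finset.sum_congr rfl fun m _ => ?_
      rw [Matrix.conjTranspose_smul, hherm m]
      simp
  have hAM : ∀ M : Matrix (Fin d) (Fin d) ℂ, (A * M).trace
      = (P * M).trace - (((d : ℝ)⁻¹ : ℝ) : ℂ) * M.trace
        - ∑ m, ((t m / 2 : ℝ) : ℂ) * (Υ m * M).trace := by
    intro M
    rw [hA, Matrix.sub_mul, Matrix.sub_mul, Matrix.trace_sub, Matrix.trace_sub,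
      Matrix.smul_mul, Matrix.one_mul, Matrix.trace_smul, Matrix.sum_mul,
      Matrix.trace_sum]
    simp [Matrix.smul_mul, Matrix.trace_smul, smul_eq_mul]
  have hA1 : A.trace = 0 := by
    have h := hAM 1
    simp only [Matrix.mul_one, Matrix.trace_one] at h
    rw [htrP] at h
    simp only [htr0] at h
    rw [h]
    simp [Fintype.card_fin]
    rw [inv_mul_cancel₀ hd0]
    ring
  have hAΥ : ∀ m0, (A * Υ m0).trace = 0 := by
    intro m0
    rw [hAM, htr0, hreal]
    have : ∑ m, ((t m / 2 : ℝ) : ℂ) * (Υ m * Υ m0).trace = (t m0 : ℂ) := by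
      rw [Finset.sum_congr rfl fun m _ => by rw [horth m m0]]
      simp [Finset.sum_ite_eq', mul_ite]
    rw [this]
    ring
  have htrA2 : ((A * A).trace).re
      = ((P * P).trace).re - (d : ℝ)⁻¹ - (∑ m, (t m) ^ 2) / 2 := by
    have h2 : (A * A).trace = (A * P).trace := by
      nth_rewrite 2 [hA]
      rw [Matrix.mul_sub, Matrix.mul_sub, Matrix.trace_sub, Matrix.trace_sub,
        Matrix.mul_smul, Matrix.mul_one, Matrix.trace_smul, hA1, Matrix.mul_sum,
        Matrix.trace_sum]
      simp only [Matrix.mul_smul, Matrix.trace_smul, smul_eq_mul]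
      simp only [show ∀ m, (A * Υ m).trace = 0 from hAΥ]
      simp
    have h3 : (A * P).trace
        = (P * P).trace - (((d : ℝ)⁻¹ : ℝ) : ℂ) - ((∑ m, (t m) ^ 2 : ℝ) : ℂ) / 2 := by
      rw [hAM P, htrP]
      have : ∑ m, ((t m / 2 : ℝ) : ℂ) * (Υ m * P).trace
          = ((∑ m, (t m) ^ 2 : ℝ) : ℂ) / 2 := by
        push_cast
        rw [Finset.sum_div]
        refine Finset.sum_congr rfl fun m _ => ?_
        rw [Matrix.trace_mul_comm, hreal m]
        push_cast
        ring
      rw [this]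
      ring
    rw [h2, h3]
    simp [Complex.sub_re, Complex.div_re, ← Complex.ofReal_pow, ← Complex.ofReal_sum]
  have hpos := trace_mul_self_re_nonneg hAherm
  rw [htrA2] at hpos
  rw [one_div]
  linarith

lemma witness {d : ℕ} (hd : 2 ≤ d) (ψ : Fin d × Fin d → ℂ)
    (hψ : ∑ i, Complex.normSq (ψ i) = 1) :
    ∃ χ : Matrix (Fin d × Fin d) (Fin d × Fin d) ℂ, IsQCState χ ∧
      (((pureState ψ - χ) * (pureState ψ - χ)).trace).re
        = 1 - ((ptrace1 (pureState ψ) * ptrace1 (pureState ψ)).trace).re := by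
  classical
  set P : Matrix (Fin d) (Fin d) ℂ := ptrace1 (pureState ψ) with hPdef
  have hPapp : ∀ j j', P j j' = ∑ i, ψ (i, j) * star (ψ (i, j')) := fun j j' => rfl
  have hψ1 : ∑ p, star (ψ p) * ψ p = (1 : ℂ) := by
    have h : ∀ p : Fin d × Fin d, star (ψ p) * ψ p = ((Complex.normSq (ψ p) : ℝ) : ℂ) := by
      intro p
      rw [Complex.star_def, Complex.normSq_eq_conj_mul_self]
    rw [Finset.sum_congr rfl fun p _ => h p, ← Complex.ofReal_sum, hψ, Complex.ofReal_one]
  have hPherm : P.IsHermitian := by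
    ext j j'
    simp only [Matrix.conjTranspose_apply, hPapp, star_sum, StarMul.star_mul, star_star]
  have htrP : P.trace = 1 := by
    have h : P.trace = ∑ j, ∑ i, ψ (i, j) * star (ψ (i, j)) := rfl
    have h2 : ∑ p : Fin d × Fin d, star (ψ p) * ψ p
        = ∑ j, ∑ i, ψ (i, j) * star (ψ (i, j)) := by
      rw [Fintype.sum_prod_type_right]
      exact Finset.sum_congr rfl fun j _ => Finset.sum_congr rfl fun i _ => by ring
    rw [h, ← h2, hψ1]
  have hPpsd : P.PosSemidef := by
    have hfact : P = (Matrix.of fun i j => star (ψ (i, j)))ᴴ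
        * (Matrix.of fun i j => star (ψ (i, j))) := by
      ext j j'
      simp only [Matrix.mul_apply, Matrix.conjTranspose_apply, Matrix.of_apply, star_star,
        hPapp]
    rw [hfact]
    exact Matrix.posSemidef_conjTranspose_mul_self _
  set lam : Fin d → ℝ := hPherm.eigenvalues with hlam
  have hlam0 : ∀ k, 0 ≤ lam k := fun k => hPpsd.eigenvalues_nonneg k
  set e : Fin d → Fin d → ℂ := fun k => ⇑(hPherm.eigenvectorBasis k) with he
  have horthe : ∀ k l, ∑ i, star (e k i) * e l i = if k = l then (1 : ℂ) else 0 := by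
    intro k l
    have h := orthonormal_iff_ite.mp hPherm.eigenvectorBasis.orthonormal k l
    rw [PiLp.inner_apply] at h
    simp [RCLike.inner_apply, Complex.star_def] at h
    exact (Finset.sum_congr rfl fun i _ => mul_comm _ _).trans h
  have hquad : ∀ k, ∑ j, ∑ j', star (e k j) * (P j j' * e k j') = ((lam k : ℝ) : ℂ) := by
    intro k
    have h1 : ∀ j, ∑ j', P j j' * e k j' = (lam k : ℂ) * e k j := by
      intro j
      have h := congrFun (hPherm.mulVec_eigenvectorBasis k) j
      simpa [Matrix.mulVec, dotProduct, Complex.real_smul] using h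
    calc ∑ j, ∑ j', star (e k j) * (P j j' * e k j')
        = ∑ j, star (e k j) * ∑ j', P j j' * e k j' := by
          exact Finset.sum_congr rfl fun j _ => (Finset.mul_sum _ _ _).symm
      _ = ∑ j, (lam k : ℂ) * (star (e k j) * e k j) := by
          refine Finset.sum_congr rfl fun j _ => ?_
          rw [h1 j]; ring
      _ = (lam k : ℂ) * ∑ j, star (e k j) * e k j := (Finset.mul_sum _ _ _).symm
      _ = ((lam k : ℝ) : ℂ) := by rw [horthe k k]; simp
  set φ : Fin d → Fin d → ℂ := fun k i => ∑ j, ψ (i, j) * star (e k j) with hφdef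
  have hφ : ∀ k, ∑ i, star (φ k i) * φ k i = ((lam k : ℝ) : ℂ) := by
    intro k
    rw [← hquad k]
    calc ∑ i, star (φ k i) * φ k i
        = ∑ i, ∑ j, ∑ j', (e k j * star (ψ (i, j))) * (ψ (i, j') * star (e k j')) := by
          refine Finset.sum_congr rfl fun i _ => ?_
          simp only [hφdef, star_sum, StarMul.star_mul, star_star]
          rw [Finset.sum_mul_sum]
      _ = ∑ j, ∑ j', ∑ i, (e k j * star (ψ (i, j))) * (ψ (i, j') * star (e k j')) := by
          rw [Finset.sum_comm]
          exact Finset.sum_congr rfl fun j _ => Finset.sum_comm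
      _ = ∑ j, ∑ j', ∑ i, (e k j' * star (ψ (i, j'))) * (ψ (i, j) * star (e k j)) :=
          Finset.sum_comm
      _ = ∑ j, ∑ j', star (e k j) * (P j j' * e k j') := by
          refine Finset.sum_congr rfl fun j _ => Finset.sum_congr rfl fun j' _ => ?_
          rw [hPapp, Finset.sum_mul, Finset.mul_sum]
          exact Finset.sum_congr rfl fun i _ => by ring
  set w : Fin d → Fin d × Fin d → ℂ := fun k p => φ k p.1 * e k p.2 with hw
  have hc : ∀ k, ∑ p, star (ψ p) * w k p = ((lam k : ℝ) : ℂ) := by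
    intro k
    rw [← hquad k]
    calc ∑ p, star (ψ p) * w k p
        = ∑ i, ∑ j, star (ψ (i, j)) * (φ k i * e k j) := by
          rw [Fintype.sum_prod_type]
      _ = ∑ i, ∑ j, ∑ j', (star (ψ (i, j)) * e k j) * (ψ (i, j') * star (e k j')) := by
          refine Finset.sum_congr rfl fun i _ => Finset.sum_congr rfl fun j _ => ?_
          simp only [hφdef, hw, Finset.sum_mul, Finset.mul_sum]
          exact Finset.sum_congr rfl fun j' _ => by ring
      _ = ∑ j, ∑ j', ∑ i, (star (ψ (i, j)) * e k j) * (ψ (i, j') * star (e k j')) := by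
          rw [Finset.sum_comm]
          exact Finset.sum_congr rfl fun j _ => Finset.sum_comm
      _ = ∑ j, ∑ j', star (e k j') * (P j' j * e k j) := by
          refine Finset.sum_congr rfl fun j _ => Finset.sum_congr rfl fun j' _ => ?_
          rw [hPapp, Finset.sum_mul, Finset.mul_sum]
          exact Finset.sum_congr rfl fun i _ => by ring
      _ = ∑ j', ∑ j, star (e k j') * (P j' j * e k j) := Finset.sum_comm
  have horthw : ∀ k l, ∑ p, star (w k p) * w l p
      = (if k = l then ((lam k : ℝ) : ℂ) else 0) := by
    intro k l
    have h : ∑ p, star (w k p) * w l p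
        = (∑ i, star (φ k i) * φ l i) * (∑ j, star (e k j) * e l j) := by
      rw [Finset.sum_mul_sum, Fintype.sum_prod_type]
      refine Finset.sum_congr rfl fun i _ => Finset.sum_congr rfl fun j _ => ?_
      simp only [hw, StarMul.star_mul]
      ring
    rw [h, horthe k l]
    by_cases hkl : k = l
    · subst hkl
      rw [if_pos rfl, if_pos rfl, mul_one]
      exact hφ k
    · simp [hkl]
  set χ : Matrix (Fin d × Fin d) (Fin d × Fin d) ℂ := ∑ k, pureState (w k) with hχ
  -- spectral theorem: trace of P² equals sum of squared eigenvalues, trace P = sum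
  have hspec :
      P = (hPherm.eigenvectorUnitary : Matrix (Fin d) (Fin d) ℂ)
        * Matrix.diagonal (RCLike.ofReal ∘ hPherm.eigenvalues)
        * (star hPherm.eigenvectorUnitary : Matrix (Fin d) (Fin d) ℂ) :=
    hPherm.spectral_theorem
  have hsum_lam : ∑ k, lam k = 1 := by
    have h1 : P.trace = ((∑ k, lam k : ℝ) : ℂ) := by
      rw [hspec, Matrix.trace_mul_cycle]
      rw [show (star hPherm.eigenvectorUnitary : Matrix (Fin d) (Fin d) ℂ)
          * (hPherm.eigenvectorUnitary : Matrix (Fin d) (Fin d) ℂ) = 1 from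
        hPherm.eigenvectorUnitary.prop.1]
      rw [Matrix.one_mul, Matrix.trace_diagonal]
      push_cast
      rfl
    rw [htrP] at h1
    exact_mod_cast h1.symm
  have hPP : ((P * P).trace).re = ∑ k, (lam k) ^ 2 := by
    have h1 : (P * P).trace = ((∑ k, (lam k) ^ 2 : ℝ) : ℂ) := by
      rw [hspec]
      have hmul : ((hPherm.eigenvectorUnitary : Matrix (Fin d) (Fin d) ℂ)
            * Matrix.diagonal (RCLike.ofReal ∘ hPherm.eigenvalues)
            * (star hPherm.eigenvectorUnitary : Matrix (Fin d) (Fin d) ℂ))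
          * ((hPherm.eigenvectorUnitary : Matrix (Fin d) (Fin d) ℂ)
            * Matrix.diagonal (RCLike.ofReal ∘ hPherm.eigenvalues)
            * (star hPherm.eigenvectorUnitary : Matrix (Fin d) (Fin d) ℂ))
          = (hPherm.eigenvectorUnitary : Matrix (Fin d) (Fin d) ℂ)
            * (Matrix.diagonal (RCLike.ofReal ∘ hPherm.eigenvalues)
              * Matrix.diagonal (RCLike.ofReal ∘ hPherm.eigenvalues))
            * (star hPherm.eigenvectorUnitary : Matrix (Fin d) (Fin d) ℂ) := by
        have hu : (star hPherm.eigenvectorUnitary : Matrix (Fin d) (Fin d) ℂ)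
            * (hPherm.eigenvectorUnitary : Matrix (Fin d) (Fin d) ℂ) = 1 :=
          hPherm.eigenvectorUnitary.prop.1
        calc _ = (hPherm.eigenvectorUnitary : Matrix (Fin d) (Fin d) ℂ)
              * Matrix.diagonal (RCLike.ofReal ∘ hPherm.eigenvalues)
              * ((star hPherm.eigenvectorUnitary : Matrix (Fin d) (Fin d) ℂ)
                * (hPherm.eigenvectorUnitary : Matrix (Fin d) (Fin d) ℂ))
              * Matrix.diagonal (RCLike.ofReal ∘ hPherm.eigenvalues)
              * (star hPherm.eigenvectorUnitary : Matrix (Fin d) (Fin d) ℂ) := by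
                simp only [Matrix.mul_assoc]
          _ = _ := by rw [hu, Matrix.mul_one]; simp only [Matrix.mul_assoc]
      rw [hmul, Matrix.trace_mul_cycle]
      rw [show (star hPherm.eigenvectorUnitary : Matrix (Fin d) (Fin d) ℂ)
          * (hPherm.eigenvectorUnitary : Matrix (Fin d) (Fin d) ℂ) = 1 from
        hPherm.eigenvectorUnitary.prop.1]
      rw [Matrix.one_mul, Matrix.diagonal_mul_diagonal, Matrix.trace_diagonal]
      push_cast
      refine Finset.sum_congr rfl fun k _ => ?_
      show (lam k : ℂ) * (lam k : ℂ) = ((lam k : ℂ)) ^ 2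
      ring
    rw [h1, Complex.ofReal_re]
  -- the QC structure
  refine ⟨χ, ⟨lam, fun k => if h : lam k = 0 then pureState (e k)
      else (((lam k)⁻¹ : ℝ) : ℂ) • pureState (φ k), e, hlam0, hsum_lam, ?_, horthe, ?_⟩, ?_⟩
  · intro k
    by_cases h : lam k = 0
    · simp only [h, dif_pos]
      refine ⟨posSemidef_pureState _, ?_⟩
      rw [trace_pureState, horthe k k]
      simp
    · simp only [h, dif_neg, not_false_iff]
      refine ⟨posSemidef_ofReal_smul (inv_nonneg.mpr (hlam0 k)) (posSemidef_pureState _), ?_⟩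
      rw [Matrix.trace_smul, trace_pureState, hφ k, smul_eq_mul]
      rw [← Complex.ofReal_mul, inv_mul_cancel₀ h, Complex.ofReal_one]
  · -- χ equals the QC sum
    rw [hχ]
    refine Finset.sum_congr rfl fun k _ => ?_
    by_cases h : lam k = 0
    · have hφ0 : ∀ i, φ k i = 0 := by
        intro i
        have hsum := hφ k
        rw [h] at hsum
        have hterm : ∀ i, star (φ k i) * φ k i = ((Complex.normSq (φ k i) : ℝ) : ℂ) := by
          intro i
          rw [Complex.star_def, Complex.normSq_eq_conj_mul_self]
        rw [Finset.sum_congr rfl fun i _ => hterm i, ← Complex.ofReal_sum] at hsum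
        have : ∑ i, Complex.normSq (φ k i) = 0 := by exact_mod_cast hsum
        have hz := (Finset.sum_eq_zero_iff_of_nonneg
          (fun i _ => Complex.normSq_nonneg (φ k i))).mp this i (Finset.mem_univ i)
        exact Complex.normSq_eq_zero.mp hz
      have h1 : pureState (w k) = 0 := by
        ext p q
        simp [pureState_apply, hw, hφ0]
      rw [h1, h]
      simp
    · show pureState (w k) = ((lam k : ℝ) : ℂ) •
        ((if h : lam k = 0 then pureState (e k)
          else (((lam k)⁻¹ : ℝ) : ℂ) • pureState (φ k)) ⊗ₖ pureState (e k))
      rw [dif_neg h, Matrix.smul_kronecker, smul_smul, ← Complex.ofReal_mul,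
        mul_inv_cancel₀ h, Complex.ofReal_one, one_smul]
      ext ⟨i, j⟩ ⟨i', j'⟩
      simp only [Matrix.kroneckerMap_apply, pureState_apply, hw, StarMul.star_mul]
      ring
  · -- the trace value
    have hρρ : ((pureState ψ * pureState ψ).trace) = 1 := by
      rw [trace_pure_mul_pure, hψ1]
      norm_num
    have hstarc : ∀ k, ∑ p, star (w k p) * ψ p = ((lam k : ℝ) : ℂ) := by
      intro k
      have h : ∑ p, star (w k p) * ψ p = star (∑ p, star (ψ p) * w k p) := by
        rw [star_sum]
        refine Finset.sum_congr rfl fun p _ => ?_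
        simp only [StarMul.star_mul, star_star]
      rw [h, hc k]
      exact Complex.conj_ofReal _
    have hρχ : ((pureState ψ * χ).trace) = ((∑ k, (lam k) ^ 2 : ℝ) : ℂ) := by
      rw [hχ, Matrix.mul_sum, Matrix.trace_sum]
      rw [Finset.sum_congr rfl fun k _ => trace_pure_mul_pure ψ (w k)]
      rw [Finset.sum_congr rfl fun k _ => by rw [hc k, hstarc k]]
      push_cast
      exact Finset.sum_congr rfl fun k _ => by ring
    have hχχ : ((χ * χ).trace) = ((∑ k, (lam k) ^ 2 : ℝ) : ℂ) := by
      rw [hχ, Matrix.sum_mul, Matrix.trace_sum]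
      rw [Finset.sum_congr rfl fun k _ => by
        rw [Matrix.mul_sum, Matrix.trace_sum,
          Finset.sum_congr rfl fun l _ => trace_pure_mul_pure (w k) (w l)]]
      rw [Finset.sum_congr rfl fun k _ => Finset.sum_congr rfl fun l _ => by
        rw [horthw k l, horthw l k]]
      push_cast
      refine Finset.sum_congr rfl fun k _ => ?_
      rw [Finset.sum_eq_single k]
      · simp
        ring
      · intro l _ hlk
        simp [hlk, Ne.symm hlk]
      · intro h
        exact absurd (Finset.mem_univ k) h
    have hexp : ((pureState ψ - χ) * (pureState ψ - χ)).trace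
        = 1 - ((∑ k, (lam k) ^ 2 : ℝ) : ℂ) := by
      rw [Matrix.sub_mul, Matrix.mul_sub, Matrix.mul_sub, Matrix.trace_sub,
        Matrix.trace_sub, Matrix.trace_sub, hρρ, hρχ, hχχ,
        Matrix.trace_mul_comm χ (pureState ψ), hρχ]
      ring
    rw [hexp, hPP]
    simp [Complex.sub_re, ← Complex.ofReal_pow, ← Complex.ofReal_sum]

lemma isHermitian_of_qc {d₁ d₂ : ℕ} {χ : Matrix (Fin d₁ × Fin d₂) (Fin d₁ × Fin d₂) ℂ}
    (h : IsQCState χ) : χ.IsHermitian := by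
  obtain ⟨α, σ, e, hα, -, hσ, -, rfl⟩ := h
  show _ = _
  rw [Matrix.conjTranspose_sum]
  refine Finset.sum_congr rfl fun k _ => ?_
  rw [Matrix.conjTranspose_smul, Complex.star_def, Complex.conj_ofReal]
  congr 1
  ext ⟨i, j⟩ ⟨i', j'⟩
  simp only [Matrix.conjTranspose_apply, Matrix.kroneckerMap_apply, pureState_apply,
    StarMul.star_mul, star_star]
  rw [(hσ k).1.1.apply i i']
  ring

end AuxLemmas

/-- for every pure two-qudit state `|ψ⟩⟨ψ|` on `ℂ^d⊗ℂ^d`,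
`D_g(|ψ⟩⟨ψ|) ≤ ((d-1)/(d(d+1)))(d + C̃²) ≤ (d-1)/d`, where `C̃ = √(1-‖r₂‖²)` is the
normalized concurrence. -/
theorem stmt9 {d : ℕ} (hd : 2 ≤ d) (ψ : Fin d × Fin d → ℂ)
    (hψ : ∑ i, Complex.normSq (ψ i) = 1)
    (Υ₂ : Fin (d ^ 2 - 1) → Matrix (Fin d) (Fin d) ℂ) (hΥ₂ : IsBlochBasis d Υ₂) :
    Dg (pureState ψ) ≤ ((d : ℝ) - 1) / (d * ((d : ℝ) + 1)) *
        ((d : ℝ) +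
          Real.sqrt (1 - ∑ i, blochVector (ptrace1 (pureState ψ)) Υ₂ i ^ 2) ^ 2) ∧
    ((d : ℝ) - 1) / (d * ((d : ℝ) + 1)) *
        ((d : ℝ) +
          Real.sqrt (1 - ∑ i, blochVector (ptrace1 (pureState ψ)) Υ₂ i ^ 2) ^ 2)
      ≤ ((d : ℝ) - 1) / d := by
  classical
  set P : Matrix (Fin d) (Fin d) ℂ := ptrace1 (pureState ψ) with hPdef
  have hPapp : ∀ j j', P j j' = ∑ i, ψ (i, j) * star (ψ (i, j')) := fun j j' => rfl
  have hψ1 : ∑ p, star (ψ p) * ψ p = (1 : ℂ) := by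
    have h : ∀ p : Fin d × Fin d, star (ψ p) * ψ p = ((Complex.normSq (ψ p) : ℝ) : ℂ) := by
      intro p
      rw [Complex.star_def, Complex.normSq_eq_conj_mul_self]
    rw [Finset.sum_congr rfl fun p _ => h p, ← Complex.ofReal_sum, hψ, Complex.ofReal_one]
  have hPherm : P.IsHermitian := by
    ext j j'
    simp only [Matrix.conjTranspose_apply, hPapp, star_sum, StarMul.star_mul, star_star]
  have htrP : P.trace = 1 := by
    have h : P.trace = ∑ j, ∑ i, ψ (i, j) * star (ψ (i, j)) := rfl
    have h2 : ∑ p : Fin d × Fin d, star (ψ p) * ψ p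
        = ∑ j, ∑ i, ψ (i, j) * star (ψ (i, j)) := by
      rw [Fintype.sum_prod_type_right]
      exact Finset.sum_congr rfl fun j _ => Finset.sum_congr rfl fun i _ => by ring
    rw [h, ← h2, hψ1]
  -- the upper bound from the witness quantum-classical state
  obtain ⟨χ, hχqc, hχval⟩ := witness hd ψ hψ
  have hbdd : BddBelow {x : ℝ | ∃ χ, IsQCState χ ∧
      x = (((pureState ψ - χ) * (pureState ψ - χ)).trace).re} := by
    refine ⟨0, fun x hx => ?_⟩
    obtain ⟨χ', hqc, rfl⟩ := hx
    exact trace_mul_self_re_nonneg ((pureState_isHermitian ψ).sub (isHermitian_of_qc hqc))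
  have hDg : Dg (pureState ψ) ≤ 1 - ((P * P).trace).re :=
    csInf_le hbdd ⟨χ, hχqc, hχval.symm⟩
  -- Bessel inequality
  have hbes := bessel hd hPherm htrP hΥ₂
  set D : ℝ := (d : ℝ) with hD
  have hD2 : (2 : ℝ) ≤ D := by rw [hD]; exact_mod_cast hd
  have hc0 : (0 : ℝ) ≤ D / (2 * (D - 1)) := by
    apply div_nonneg <;> linarith
  set Sq : ℝ := ((P * P).trace).re with hSq
  set T : ℝ := ∑ m, (((P * Υ₂ m).trace).re) ^ 2 with hT
  set x : ℝ := ∑ i, blochVector P Υ₂ i ^ 2 with hx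
  have hx_eq : x = (D / (2 * (D - 1))) * T := by
    rw [hx, hT, Finset.mul_sum]
    refine Finset.sum_congr rfl fun i _ => ?_
    rw [blochVector, mul_pow, Real.sq_sqrt hc0]
  have hxn : 0 ≤ x := by
    rw [hx]
    exact Finset.sum_nonneg fun i _ => sq_nonneg _
  have hTn : 0 ≤ T := Finset.sum_nonneg fun i _ => sq_nonneg _
  have key1 : (D - 1) * x ≤ D * Sq - 1 := by
    have h1 : (D - 1) * x = (D / 2) * T := by
      have hne : (2 : ℝ) * (D - 1) ≠ 0 := ne_of_gt (by linarith)
      have hne1 : D - 1 ≠ 0 := ne_of_gt (by linarith)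
      rw [hx_eq, ← mul_assoc, mul_div_assoc', mul_comm (2:ℝ) (D - 1), mul_div_mul_left _ _ hne1]
    have h2 : T ≤ 2 * (Sq - 1 / D) := hbes
    have hDpos : (0 : ℝ) < D := by linarith
    rw [h1]
    calc (D / 2) * T ≤ (D / 2) * (2 * (Sq - 1 / D)) := by
          apply mul_le_mul_of_nonneg_left h2
          linarith
      _ = D * Sq - 1 := by field_simp
  have hDpos : (0 : ℝ) < D := by linarith
  have hDD1 : (0 : ℝ) < D * (D + 1) := by nlinarith
  constructor
  · refine le_trans hDg ?_
    rw [div_mul_eq_mul_div, le_div_iff₀ hDD1]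
    rcases le_or_gt x 1 with hx1 | hx1
    · rw [Real.sq_sqrt (by linarith : (0:ℝ) ≤ 1 - x)]
      nlinarith [key1, hxn, mul_nonneg hxn hDpos.le]
    · have hs0 : Real.sqrt (1 - x) = 0 := Real.sqrt_eq_zero_of_nonpos (by linarith)
      rw [hs0]
      norm_num
      have h1 : (D - 1) * 1 ≤ (D - 1) * x :=
        mul_le_mul_of_nonneg_left hx1.le (by linarith)
      have h2 : D ≤ D * Sq := by linarith
      have h3 : (1 - Sq) * (D * (D + 1)) ≤ 0 := by nlinarith
      nlinarith
  · rw [div_mul_eq_mul_div, div_le_div_iff₀ hDD1 hDpos]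
    have hC2 : Real.sqrt (1 - x) ^ 2 ≤ 1 := by
      rcases le_or_gt x 1 with hx1 | hx1
      · rw [Real.sq_sqrt (by linarith : (0:ℝ) ≤ 1 - x)]
        linarith
      · rw [Real.sqrt_eq_zero_of_nonpos (by linarith)]
        norm_num
    have hC2n : 0 ≤ Real.sqrt (1 - x) ^ 2 := sq_nonneg _
    have h1 : (D - 1) * (D + Real.sqrt (1 - x) ^ 2) ≤ (D - 1) * (D + 1) :=
      mul_le_mul_of_nonneg_left (by linarith) (by linarith)
    nlinarith [mul_le_mul_of_nonneg_right h1 hDpos.le]
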